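/- In the ring of formal power series ℤ[[t]], the Alexander polynomial Δ satisfies Δ(t)·(1 − t^α) = (1 − t)·∑_{s ∈ S_*} t^s. -/

import Mathlib

open PowerSeries Finset

/-- Let `Δ ∈ ℤ[t]` be the unsymmetrized Alexander polynomial of a
Seifert fiber, i.e. the quotient `(1 − t^α)^{n−2}(1 − t)/∏_j(1 − t^{c_j})`.
Then in `ℤ[[t]]` one has `Δ(t)·(1 − t^α) = (1 − t)·∑_{s ∈ S_*} t^s`, where
`S_* = {s : m(s) = 1}`. -/
theorem alexander_poly_mul_one_sub_pow_alpha
    (n : ℕ) (hn : 3 ≤ n) (a : Fin (n - 1) → ℕ)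
    (ha : ∀ j, 2 ≤ a j)
    (hcop : ∀ i j, i ≠ j → Nat.Coprime (a i) (a j))
    (α : ℕ) (hα : α = ∏ j, a j)
    (c : Fin (n - 1) → ℕ) (hc : ∀ j, a j * c j = α)
    (m : ℕ → ℕ)
    (hm : ∀ s, m s = Set.ncard {x : Fin (n - 1) → ℕ | ∑ j, x j * c j = s})
    (Δ : Polynomial ℤ)
    (hΔ : Δ * ∏ j, (1 - (Polynomial.X : Polynomial ℤ) ^ (c j))
        = (1 - (Polynomial.X : Polynomial ℤ) ^ α) ^ (n - 2) *
            (1 - (Polynomial.X : Polynomial ℤ))) :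
    (Δ : PowerSeries ℤ) * (1 - (PowerSeries.X : PowerSeries ℤ) ^ α)
      = (1 - (PowerSeries.X : PowerSeries ℤ)) *
          PowerSeries.mk (fun s => if m s = 1 then (1 : ℤ) else 0) := by
  classical
  have ha0 : ∀ j, 0 < a j := fun j => lt_of_lt_of_le two_pos (ha j)
  have hα0 : 0 < α := by
    rw [hα]; exact Finset.prod_pos (fun j _ => ha0 j)
  have hc0 : ∀ j, 0 < c j := by
    intro j
    rcases Nat.eq_zero_or_pos (c j) with h | h
    · have := hc j
      rw [h, mul_zero] at this
      omega
    · exact h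
  have hcprod : ∀ j, c j = ∏ i ∈ Finset.univ.erase j, a i := by
    intro j
    have h1 : a j * c j = a j * ∏ i ∈ Finset.univ.erase j, a i := by
      rw [hc, hα, ← Finset.mul_prod_erase _ _ (Finset.mem_univ j)]
    exact Nat.eq_of_mul_eq_mul_left (ha0 j) h1
  have hcopc : ∀ j, Nat.Coprime (a j) (c j) := by
    intro j
    rw [hcprod j]
    exact Nat.Coprime.prod_right fun i hi =>
      hcop j i (Ne.symm (Finset.ne_of_mem_erase hi))
  have hdvd : ∀ i j, i ≠ j → a i ∣ c j := by
    intro i j hij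
    rw [hcprod j]
    exact Finset.dvd_prod_of_mem _ (Finset.mem_erase.2 ⟨hij, Finset.mem_univ i⟩)
  -- congruence: any two representations agree mod a j
  have hmod : ∀ (x y : Fin (n - 1) → ℕ), (∑ j, x j * c j) = (∑ j, y j * c j) →
      ∀ j, x j % a j = y j % a j := by
    intro x y hxy j
    haveI : NeZero (a j) := ⟨(ha0 j).ne'⟩
    have hcast : ((∑ i, x i * c i : ℕ) : ZMod (a j))
        = ((∑ i, y i * c i : ℕ) : ZMod (a j)) := by rw [hxy]
    push_cast at hcast
    have hz : ∀ i, i ≠ j → ((c i : ℕ) : ZMod (a j)) = 0 := by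
      intro i hi
      exact (ZMod.natCast_eq_zero_iff _ _).2 (hdvd j i (Ne.symm hi))
    rw [Finset.sum_eq_single j (fun i _ hi => by rw [hz i hi, mul_zero])
      (fun h => absurd (Finset.mem_univ j) h),
      Finset.sum_eq_single j (fun i _ hi => by rw [hz i hi, mul_zero])
      (fun h => absurd (Finset.mem_univ j) h)] at hcast
    have hu : IsUnit ((c j : ℕ) : ZMod (a j)) :=
      (ZMod.isUnit_iff_coprime _ _).2 ((hcopc j).symm)
    have := hu.mul_right_cancel hcast
    exact (ZMod.natCast_eq_natCast_iff _ _ _).1 this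
  -- uniqueness of bounded representations
  have huniq : ∀ (x y : Fin (n - 1) → ℕ), (∀ j, x j < a j) →
      (∑ j, x j * c j) = (∑ j, y j * c j) → x = y := by
    intro x y hx hxy
    have h1 : ∀ j, y j % a j = x j := fun j => by
      rw [← hmod x y hxy j, Nat.mod_eq_of_lt (hx j)]
    have h2 : ∑ j, y j * c j = (∑ j, x j * c j) + (∑ j, y j / a j) * α := by
      rw [Finset.sum_mul, ← Finset.sum_add_distrib]
      apply Finset.sum_congr rfl
      intro j _
      conv_lhs => rw [← Nat.div_add_mod (y j) (a j), h1 j]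
      rw [← hc j]; ring
    rw [h2] at hxy
    have h3 : ∑ j, y j / a j = 0 := by
      have h0 : (∑ j, y j / a j) * α = 0 := by omega
      exact (Nat.mul_eq_zero.1 h0).resolve_right hα0.ne'
    funext j
    have h4 : y j / a j = 0 :=
      Finset.sum_eq_zero_iff.1 h3 j (Finset.mem_univ j)
    have := Nat.div_add_mod (y j) (a j)
    rw [h4, h1 j] at this
    omega
  have hexne : ∀ j : Fin (n - 1), ∃ i : Fin (n - 1), i ≠ j := by
    intro j
    have hcard2 : 1 < Fintype.card (Fin (n - 1)) := by
      rw [Fintype.card_fin]; omega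
    exact Fintype.exists_ne_of_one_lt_card hcard2 j
  -- cardinality of bounded representations
  have hcard : ∀ s : ℕ,
      ((Fintype.piFinset (fun j => Finset.range (a j))).filter
        (fun x => ∑ j, x j * c j = s)).card = if m s = 1 then 1 else 0 := by
    intro s
    by_cases hTn : ((Fintype.piFinset (fun j => Finset.range (a j))).filter
        (fun x => ∑ j, x j * c j = s)).Nonempty
    · obtain ⟨x, hxT⟩ := hTn
      rw [Finset.mem_filter, Fintype.mem_piFinset] at hxT
      obtain ⟨hxb, hxs⟩ := hxT
      have hxb' : ∀ j, x j < a j := fun j => Finset.mem_range.1 (hxb j)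
      have hset : {y : Fin (n - 1) → ℕ | ∑ j, y j * c j = s} = {x} := by
        ext y
        simp only [Set.mem_setOf_eq, Set.mem_singleton_iff]
        constructor
        · intro hy
          exact (huniq x y hxb' (hxs.trans hy.symm)).symm
        · rintro rfl; exact hxs
      have hm1 : m s = 1 := by rw [hm, hset, Set.ncard_singleton]
      rw [if_pos hm1, Finset.card_eq_one]
      refine ⟨x, ?_⟩
      ext y
      simp only [Finset.mem_filter, Fintype.mem_piFinset, Finset.mem_range,
        Finset.mem_singleton]
      constructor
      · rintro ⟨hyb, hys⟩
        exact (huniq x y hxb' (hxs.trans hys.symm)).symm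
      · rintro rfl; exact ⟨fun j => hxb' j, hxs⟩
    · have hTe : ((Fintype.piFinset (fun j => Finset.range (a j))).filter
          (fun x => ∑ j, x j * c j = s)) = ∅ :=
        Finset.not_nonempty_iff_eq_empty.1 hTn
      have hmne : m s ≠ 1 := by
        rw [hm]
        intro h1
        obtain ⟨y, hy⟩ := Set.ncard_eq_one.1 h1
        have hys : ∑ j, y j * c j = s := by
          have : y ∈ {x : Fin (n - 1) → ℕ | ∑ j, x j * c j = s} := by
            rw [hy]; exact Set.mem_singleton y
          exact this
        have hub : ∃ j, a j ≤ y j := by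
          by_contra hb
          push_neg at hb
          have hyT : y ∈ ((Fintype.piFinset (fun j => Finset.range (a j))).filter
              (fun x => ∑ j, x j * c j = s)) := by
            rw [Finset.mem_filter, Fintype.mem_piFinset]
            exact ⟨fun j => Finset.mem_range.2 (hb j), hys⟩
          rw [hTe] at hyT
          exact Finset.notMem_empty y hyT
        obtain ⟨j, hj⟩ := hub
        obtain ⟨i, hij⟩ := hexne j
        obtain ⟨z, hzj, hzi, hzr⟩ : ∃ z : Fin (n - 1) → ℕ, z j = y j - a j ∧
            z i = y i + a i ∧ ∀ k, k ≠ j → k ≠ i → z k = y k :=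
          ⟨fun k => if k = j then y j - a j else if k = i then y i + a i else y k,
            by simp, by simp [hij], fun k h1 h2 => by simp [h1, h2]⟩
        have hkey : ∀ (w : Fin (n - 1) → ℕ),
            ∑ k, w k * c k = w j * c j + (w i * c i +
              ∑ k ∈ (Finset.univ.erase j).erase i, w k * c k) := by
          intro w
          rw [← Finset.add_sum_erase _ _ (Finset.mem_univ j),
            ← Finset.add_sum_erase _ _ (Finset.mem_erase.2 ⟨hij, Finset.mem_univ i⟩)]
        have hzs : ∑ k, z k * c k = s := by
          rw [hkey z, hzj, hzi]
          rw [hkey y] at hys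
          have hrest : ∑ k ∈ (Finset.univ.erase j).erase i, z k * c k
              = ∑ k ∈ (Finset.univ.erase j).erase i, y k * c k := by
            apply Finset.sum_congr rfl
            intro k hk
            rw [hzr k (Finset.ne_of_mem_erase (Finset.mem_of_mem_erase hk))
              (Finset.ne_of_mem_erase hk)]
          rw [hrest]
          have e1 : (y j - a j) * c j + α = y j * c j := by
            rw [← hc j, ← add_mul, Nat.sub_add_cancel hj]
          have e2 : (y i + a i) * c i = y i * c i + α := by
            rw [← hc i]; ring
          rw [e2]
          calc (y j - a j) * c j + ((y i * c i + α) +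
                ∑ k ∈ (Finset.univ.erase j).erase i, y k * c k)
              = ((y j - a j) * c j + α) + (y i * c i +
                ∑ k ∈ (Finset.univ.erase j).erase i, y k * c k) := by ring
            _ = y j * c j + (y i * c i +
                ∑ k ∈ (Finset.univ.erase j).erase i, y k * c k) := by rw [e1]
            _ = s := hys
        have hzy : z = y := by
          have hzmem : z ∈ {x : Fin (n - 1) → ℕ | ∑ k, x k * c k = s} := hzs
          rw [hy] at hzmem
          exact hzmem
        have hzjy : z j = y j := by rw [hzy]
        rw [hzj] at hzjy
        exact (Nat.sub_lt (lt_of_lt_of_le (ha0 j) hj) (ha0 j)).ne hzjy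
      rw [hTe, Finset.card_empty, if_neg hmne]
  -- the product of truncated geometric sums
  have hGprod : (∏ j, ∑ k ∈ Finset.range (a j),
        (PowerSeries.X : PowerSeries ℤ) ^ (k * c j))
      = PowerSeries.mk (fun s => if m s = 1 then (1 : ℤ) else 0) := by
    ext s
    rw [PowerSeries.coeff_mk, Finset.prod_univ_sum]
    simp_rw [Finset.prod_pow_eq_pow_sum]
    rw [map_sum]
    simp_rw [PowerSeries.coeff_X_pow]
    rw [Finset.sum_boole]
    rw [Finset.filter_congr (fun x _ => eq_comm), hcard s]
    split_ifs <;> simp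
  have hG1 : ∀ j, (1 - (PowerSeries.X : PowerSeries ℤ) ^ (c j)) *
      (∑ k ∈ Finset.range (a j), (PowerSeries.X : PowerSeries ℤ) ^ (k * c j))
      = 1 - (PowerSeries.X : PowerSeries ℤ) ^ α := by
    intro j
    have h2 : (∑ k ∈ Finset.range (a j), (PowerSeries.X : PowerSeries ℤ) ^ (k * c j))
        = ∑ k ∈ Finset.range (a j), ((PowerSeries.X : PowerSeries ℤ) ^ (c j)) ^ k := by
      apply Finset.sum_congr rfl
      intro k _
      rw [← pow_mul, mul_comm]
    rw [h2]
    have h3 := geom_sum_mul ((PowerSeries.X : PowerSeries ℤ) ^ (c j)) (a j)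
    have h4 : ((PowerSeries.X : PowerSeries ℤ) ^ (c j)) ^ (a j)
        = (PowerSeries.X : PowerSeries ℤ) ^ α := by
      rw [← pow_mul, mul_comm, hc j]
    calc (1 - (PowerSeries.X : PowerSeries ℤ) ^ (c j)) *
          ∑ k ∈ Finset.range (a j), ((PowerSeries.X : PowerSeries ℤ) ^ (c j)) ^ k
        = -((∑ k ∈ Finset.range (a j), ((PowerSeries.X : PowerSeries ℤ) ^ (c j)) ^ k) *
            ((PowerSeries.X : PowerSeries ℤ) ^ (c j) - 1)) := by ring
      _ = -(((PowerSeries.X : PowerSeries ℤ) ^ (c j)) ^ (a j) - 1) := by rw [h3]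
      _ = 1 - (PowerSeries.X : PowerSeries ℤ) ^ α := by rw [h4]; ring
  -- nonzeroness of the denominator
  have hP : (∏ j, (1 - (PowerSeries.X : PowerSeries ℤ) ^ (c j))) ≠ 0 := by
    rw [Finset.prod_ne_zero_iff]
    intro j _ h0
    have := congrArg (PowerSeries.constantCoeff (R := ℤ)) h0
    simp [(hc0 j).ne'] at this
  -- the polynomial identity in power series
  have hΔ' : (Δ : PowerSeries ℤ) *
      ∏ j, (1 - (PowerSeries.X : PowerSeries ℤ) ^ (c j))
      = (1 - (PowerSeries.X : PowerSeries ℤ) ^ α) ^ (n - 2) *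
        (1 - (PowerSeries.X : PowerSeries ℤ)) := by
    have := congrArg (Polynomial.coeToPowerSeries.ringHom (R := ℤ)) hΔ
    simpa only [map_mul, map_prod, map_sub, map_pow, map_one,
      Polynomial.coeToPowerSeries.ringHom_apply, Polynomial.coe_X] using this
  apply mul_right_cancel₀ hP
  calc (Δ : PowerSeries ℤ) * (1 - (PowerSeries.X : PowerSeries ℤ) ^ α) *
        ∏ j, (1 - (PowerSeries.X : PowerSeries ℤ) ^ (c j))
      = ((Δ : PowerSeries ℤ) * ∏ j, (1 - (PowerSeries.X : PowerSeries ℤ) ^ (c j))) *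
        (1 - (PowerSeries.X : PowerSeries ℤ) ^ α) := by ring
    _ = (1 - (PowerSeries.X : PowerSeries ℤ) ^ α) ^ (n - 2) *
        (1 - (PowerSeries.X : PowerSeries ℤ)) *
        (1 - (PowerSeries.X : PowerSeries ℤ) ^ α) := by rw [hΔ']
    _ = (1 - (PowerSeries.X : PowerSeries ℤ)) *
        (1 - (PowerSeries.X : PowerSeries ℤ) ^ α) ^ (n - 1) := by
        rw [show n - 1 = (n - 2) + 1 by omega, pow_succ]; ring
    _ = (1 - (PowerSeries.X : PowerSeries ℤ)) *
        ∏ j : Fin (n - 1), (1 - (PowerSeries.X : PowerSeries ℤ) ^ α) := by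
        rw [Finset.prod_const, Finset.card_univ, Fintype.card_fin]
    _ = (1 - (PowerSeries.X : PowerSeries ℤ)) *
        ∏ j, ((1 - (PowerSeries.X : PowerSeries ℤ) ^ (c j)) *
          (∑ k ∈ Finset.range (a j), (PowerSeries.X : PowerSeries ℤ) ^ (k * c j))) := by
        rw [Finset.prod_congr rfl (fun j _ => (hG1 j).symm)]
    _ = (1 - (PowerSeries.X : PowerSeries ℤ)) *
        PowerSeries.mk (fun s => if m s = 1 then (1 : ℤ) else 0) *
        ∏ j, (1 - (PowerSeries.X : PowerSeries ℤ) ^ (c j)) := by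
        rw [Finset.prod_mul_distrib, hGprod]; ring
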